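/- arXiv:1910.02008 — 2 statements merged into one kernel-verified Lean document; each statement's English description precedes it below -/
import Mathlib

section
/- Let $U:\mathbb{R}^d\to\mathbb{R}$ be continuously differentiable with gradient $h=\nabla U$ satisfying the dissipativity condition $\langle h(\theta),\theta\rangle\ge a|\theta|^2-b$ for constants $a,b>0$. Define $V_p(\theta)=(1+|\theta|^2)^{p/2}$ for $p\ge 2$ and fix $\beta>0$. Then for all $\theta\in\mathbb{R}^d$: $\frac{\Delta V_p(\theta)}{\beta}-\langle h(\theta),\nabla V_p(\theta)\rangle\le -\bar c(p)V_p(\theta)+\tilde c(p)$, where $\bar c(p)=ap/4$, $\tilde c(p)=(3/4)ap(1+\overline M_p^2)^{p/2}$ and $\overline M_p=(1/3+4b/(3a)+4d/(3a\beta)+4(p-2)/(3a\beta))^{1/2}$. -/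
open scoped RealInnerProductSpace

private lemma stmt_3_aux (a b β p s I : ℝ) (d : ℕ) (ha : 0 < a) (hb : 0 < b)
    (hβ : 0 < β) (hp : 2 ≤ p) (hs0 : 0 ≤ s) (hI : I ≥ a * s - b) :
    (p * (1 + s) ^ (p / 2 - 2) * (d * (1 + s) + (p - 2) * s)) / β
        - p * (1 + s) ^ (p / 2 - 1) * I
      ≤ -(a * p / 4) * (1 + s) ^ (p / 2)
        + (3 / 4) * a * p *
          (1 + (1 / 3 + 4 * b / (3 * a) + 4 * d / (3 * a * β)
            + 4 * (p - 2) / (3 * a * β))) ^ (p / 2) := by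
  have hd0 : (0:ℝ) ≤ d := Nat.cast_nonneg d
  set t : ℝ := 1 + s with htdef
  have ht1 : 1 ≤ t := by linarith
  have ht0 : 0 < t := by linarith
  set M2 : ℝ := 1 / 3 + 4 * b / (3 * a) + 4 * d / (3 * a * β)
      + 4 * (p - 2) / (3 * a * β) with hM2def
  have hM2 : 0 ≤ M2 := by
    have h1 : (0:ℝ) ≤ 4 * b / (3 * a) := by positivity
    have h2 : (0:ℝ) ≤ 4 * (d:ℝ) / (3 * a * β) := by positivity
    have h3 : (0:ℝ) ≤ 4 * (p - 2) / (3 * a * β) := by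
      apply div_nonneg (by linarith) (by positivity)
    rw [hM2def]; linarith
  have hM20 : (0:ℝ) < 1 + M2 := by linarith
  set x : ℝ := t ^ (p / 2 - 2) with hxdef
  set y : ℝ := t ^ (p / 2 - 1) with hydef
  set z : ℝ := t ^ (p / 2) with hzdef
  set w : ℝ := (1 + M2) ^ (p / 2 - 1) with hwdef
  set v : ℝ := (1 + M2) ^ (p / 2) with hvdef
  have hx0 : 0 < x := Real.rpow_pos_of_pos ht0 _
  have hy0 : 0 < y := Real.rpow_pos_of_pos ht0 _
  have hw0 : 0 < w := Real.rpow_pos_of_pos hM20 _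
  have hv0 : 0 < v := Real.rpow_pos_of_pos hM20 _
  have hxy : x * t = y := by
    rw [hxdef, hydef, ← Real.rpow_add_one ht0.ne']; congr 1; ring
  have hyz : y * t = z := by
    rw [hydef, hzdef, ← Real.rpow_add_one ht0.ne']; congr 1; ring
  have hwv : w * (1 + M2) = v := by
    rw [hwdef, hvdef, ← Real.rpow_add_one hM20.ne']; congr 1; ring
  have hcase : t ≤ 1 + M2 → y ≤ w := fun hle =>
    Real.rpow_le_rpow ht0.le hle (by linarith)
  set C : ℝ := a + b + d / β + (p - 2) / β with hCdef
  have hC : C = 3 * a / 4 * (1 + M2) := by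
    rw [hCdef, hM2def]; field_simp; ring
  have hC0 : 0 ≤ C := by
    rw [hC]; exact mul_nonneg (by linarith) (by linarith)
  clear_value x y z w v C M2 t
  clear hxdef hydef hzdef hwdef hvdef hM2def
  -- step 1: dissipativity
  have step1 : p * x * (↑d * t + (p - 2) * s) / β - p * y * I ≤
      p * x * (↑d * t + (p - 2) * s) / β - p * y * (a * s - b) := by
    have : p * y * (a * s - b) ≤ p * y * I :=
      mul_le_mul_of_nonneg_left hI (by positivity)
    linarith
  -- step 2
  have hst : s ≤ t := by linarith
  have hdiv : p * x * (↑d * t + (p - 2) * s) / β ≤ p * y * (↑d / β + (p - 2) / β) := by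
    rw [div_le_iff₀ hβ]
    have key : p * x * (↑d * t + (p - 2) * s) ≤ p * y * (↑d + (p - 2)) := by
      have k0 : (p - 2) * s ≤ (p - 2) * t :=
        mul_le_mul_of_nonneg_left hst (by linarith)
      have k1 : p * x * (↑d * t + (p - 2) * s) ≤ p * x * (↑d * t + (p - 2) * t) := by
        apply mul_le_mul_of_nonneg_left _ (by positivity : (0:ℝ) ≤ p * x)
        linarith
      have k2 : p * x * (↑d * t + (p - 2) * t) = p * y * (↑d + (p - 2)) := by
        rw [← hxy]; ring
      linarith
    calc p * x * (↑d * t + (p - 2) * s) ≤ p * y * (↑d + (p - 2)) := key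
      _ = p * y * (↑d / β + (p - 2) / β) * β := by field_simp
  have step2 : p * x * (↑d * t + (p - 2) * s) / β - p * y * (a * s - b) ≤
      -(a * p / 4) * z + p * y * (C - 3 * a / 4 * t) := by
    have he : - (p * y * (a * s - b)) = -(a * p) * z + p * y * (a + b) := by
      rw [← hyz, htdef]; ring
    have e1 : p * y * C = p * y * (a + b) + p * y * (↑d / β + (p - 2) / β) := by
      rw [hCdef]; ring
    have e2 : p * y * (C - 3 * a / 4 * t) = p * y * C - 3 * a / 4 * p * z := by
      rw [← hyz]; ring
    linarith [hdiv, he, e1, e2]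
  -- step 3
  have step3 : p * y * (C - 3 * a / 4 * t) ≤ 3 / 4 * a * p * v := by
    rcases le_or_gt t (1 + M2) with hle | hlt
    · have hyw : y ≤ w := hcase hle
      have hpos : (0:ℝ) ≤ p * y * (3 * a / 4 * t) := by positivity
      have h1 : p * y * (C - 3 * a / 4 * t) ≤ p * y * C := by
        have e : p * y * (C - 3 * a / 4 * t) = p * y * C - p * y * (3 * a / 4 * t) := by
          ring
        linarith [e, hpos]
      have h2 : p * y * C ≤ p * w * C := by
        have e := mul_le_mul_of_nonneg_left (mul_le_mul_of_nonneg_right hyw hC0)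
          (by linarith : (0:ℝ) ≤ p)
        calc p * y * C = p * (y * C) := by ring
          _ ≤ p * (w * C) := e
          _ = p * w * C := by ring
      calc p * y * (C - 3 * a / 4 * t) ≤ p * w * C := by linarith
        _ = 3 / 4 * a * p * v := by rw [← hwv, hC]; ring
    · have h1 : C - 3 * a / 4 * t ≤ 0 := by
        rw [hC]
        have := mul_le_mul_of_nonneg_left hlt.le (by linarith : (0:ℝ) ≤ 3 * a / 4)
        linarith
      have h2 : p * y * (C - 3 * a / 4 * t) ≤ 0 :=
        mul_nonpos_of_nonneg_of_nonpos (by positivity) h1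
      have h3 : 0 ≤ 3 / 4 * a * p * v := by
        have := mul_pos (mul_pos (by linarith : (0:ℝ) < 3 / 4 * a)
          (by linarith : (0:ℝ) < p)) hv0
        linarith
      linarith
  calc p * x * (↑d * t + (p - 2) * s) / β - p * y * I
      ≤ -(a * p / 4) * z + p * y * (C - 3 * a / 4 * t) := le_trans step1 step2
    _ ≤ -(a * p / 4) * z + 3 / 4 * a * p * v := by linarith

theorem stmt_3 {d : ℕ}
    (U : EuclideanSpace ℝ (Fin d) → ℝ)
    (h : EuclideanSpace ℝ (Fin d) → EuclideanSpace ℝ (Fin d))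
    (hgrad : ∀ θ, HasGradientAt U (h θ) θ) (hcont : Continuous h)
    (a b β : ℝ) (ha : 0 < a) (hb : 0 < b) (hβ : 0 < β)
    (hdiss : ∀ θ, ⟪h θ, θ⟫ ≥ a * ‖θ‖ ^ 2 - b)
    (p : ℝ) (hp : 2 ≤ p) :
    ∀ θ : EuclideanSpace ℝ (Fin d),
      (p * (1 + ‖θ‖ ^ 2) ^ (p / 2 - 2) * (d * (1 + ‖θ‖ ^ 2) + (p - 2) * ‖θ‖ ^ 2)) / β
        - ⟪h θ, (p * (1 + ‖θ‖ ^ 2) ^ (p / 2 - 1)) • θ⟫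
      ≤ -(a * p / 4) * (1 + ‖θ‖ ^ 2) ^ (p / 2)
        + (3 / 4) * a * p *
          (1 + (Real.sqrt (1 / 3 + 4 * b / (3 * a) + 4 * d / (3 * a * β)
            + 4 * (p - 2) / (3 * a * β))) ^ 2) ^ (p / 2) := by
  intro θ
  have hM2 : (0:ℝ) ≤ 1 / 3 + 4 * b / (3 * a) + 4 * d / (3 * a * β)
      + 4 * (p - 2) / (3 * a * β) := by
    have h1 : (0:ℝ) ≤ 4 * b / (3 * a) := by positivity
    have h2 : (0:ℝ) ≤ 4 * (d:ℝ) / (3 * a * β) := by positivity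
    have h3 : (0:ℝ) ≤ 4 * (p - 2) / (3 * a * β) := by
      apply div_nonneg (by linarith) (by positivity)
    linarith
  rw [real_inner_smul_right, Real.sq_sqrt hM2]
  exact stmt_3_aux a b β p (‖θ‖ ^ 2) ⟪h θ, θ⟫ d ha hb hβ hp (sq_nonneg _) (hdiss θ)
end

section
/- Define $H_i(\theta,\mathbf{Z}_i)=\frac{1}{n}\big(\theta-\hat a+\frac{2\hat a}{1+e^{2\hat a^{\mathsf T}\theta}}\big)+\frac{Z_i}{1+e^{-Z_i^{\mathsf T}\theta}}-Y_iZ_i$ for $\theta,Z_i,\hat a\in\mathbb{R}^d$, $Y_i\in\mathbb{R}$, and integer $n\ge 1$. Then for all $\theta$: $\langle\theta, H_i(\theta,\mathbf{Z}_i)\rangle\ge \frac{1}{4n}|\theta|^2-\frac{1}{2n}|\hat a|^2-2n\big(|\mathbf{Z}_i|^2+|\mathbf{Z}_i|^4\big)$, where $|\mathbf{Z}_i|^2=|Z_i|^2+Y_i^2$. -/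
open scoped RealInnerProductSpace

set_option maxHeartbeats 1000000 in
lemma key_real (n r a z s t u σ Y : ℝ) (hn : 1 ≤ n)
    (hu0 : 0 < u) (hu2 : u < 2) (hσ0 : 0 < σ) (hσ1 : σ < 1)
    (hr : 0 ≤ r) (ha : 0 ≤ a) (hz : 0 ≤ z)
    (hs : |s| ≤ a * r) (ht : |t| ≤ z * r) :
    (1 / n) * (r ^ 2 - s + u * s) + σ * t - Y * t ≥
      (1 / (4 * n)) * r ^ 2 - (1 / (2 * n)) * a ^ 2
        - 2 * n * ((z ^ 2 + Y ^ 2) + (z ^ 2 + Y ^ 2) ^ 2) := by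
  have hn0 : (0 : ℝ) < n := by linarith
  have hA : u * s - s ≥ -|s| := by
    rcases abs_cases s with ⟨h1, h2⟩ | ⟨h1, h2⟩ <;> nlinarith
  have g1 : r ^ 2 - s + u * s ≥ (1 / 2) * r ^ 2 - (1 / 2) * a ^ 2 := by
    nlinarith [sq_nonneg (r - a)]
  have habsY : (0 : ℝ) ≤ |Y| := abs_nonneg Y
  have hσY : |σ - Y| ≤ 1 + |Y| := by
    calc |σ - Y| ≤ |σ| + |Y| := abs_sub _ _
    _ ≤ 1 + |Y| := by rw [abs_of_pos hσ0]; linarith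
  have f3 : (σ - Y) * t ≥ -((1 + |Y|) * (z * r)) := by
    have habs : |(σ - Y) * t| ≤ (1 + |Y|) * (z * r) := by
      rw [abs_mul]
      exact mul_le_mul hσY ht (abs_nonneg t) (by linarith)
    have := neg_abs_le ((σ - Y) * t)
    linarith
  have g2 : n * ((σ - Y) * t) ≥ n * (-((1 + |Y|) * (z * r))) :=
    mul_le_mul_of_nonneg_left f3 (le_of_lt hn0)
  have g3 : n * ((1 + |Y|) * (z * r)) ≤ (1 / 4) * r ^ 2 + n ^ 2 * (1 + |Y|) ^ 2 * z ^ 2 := by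
    nlinarith [sq_nonneg (r - 2 * n * (1 + |Y|) * z)]
  have g4 : n ^ 2 * (1 + |Y|) ^ 2 * z ^ 2 ≤
      2 * n ^ 2 * ((z ^ 2 + Y ^ 2) + (z ^ 2 + Y ^ 2) ^ 2) := by
    have hY2 : |Y| ^ 2 = Y ^ 2 := sq_abs Y
    nlinarith [sq_nonneg (n * z * (1 - |Y|)), sq_nonneg (n * z), sq_nonneg (n * Y),
      sq_nonneg (n * z ^ 2), sq_nonneg (n * Y ^ 2), sq_nonneg (n * z * Y)]
  rw [ge_iff_le, ← sub_nonneg]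
  have hmul : 0 ≤ n * ((1 / n) * (r ^ 2 - s + u * s) + σ * t - Y * t -
      ((1 / (4 * n)) * r ^ 2 - (1 / (2 * n)) * a ^ 2
        - 2 * n * ((z ^ 2 + Y ^ 2) + (z ^ 2 + Y ^ 2) ^ 2))) := by
    have hexpand : n * ((1 / n) * (r ^ 2 - s + u * s) + σ * t - Y * t -
        ((1 / (4 * n)) * r ^ 2 - (1 / (2 * n)) * a ^ 2
          - 2 * n * ((z ^ 2 + Y ^ 2) + (z ^ 2 + Y ^ 2) ^ 2))) =
        (r ^ 2 - s + u * s) + n * ((σ - Y) * t) - (1 / 4) * r ^ 2 + (1 / 2) * a ^ 2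
          + 2 * n ^ 2 * ((z ^ 2 + Y ^ 2) + (z ^ 2 + Y ^ 2) ^ 2) := by
      field_simp
      ring
    rw [hexpand]
    linarith
  nlinarith [hmul]

theorem stmt_9 {d : ℕ} (n : ℕ) (hn : 1 ≤ n)
    (ahat Z : EuclideanSpace ℝ (Fin d)) (Y : ℝ)
    (Hi : EuclideanSpace ℝ (Fin d) → EuclideanSpace ℝ (Fin d))
    (hHi : ∀ θ, Hi θ = (1 / (n : ℝ)) • (θ - ahat + (2 / (1 + Real.exp (2 * ⟪ahat, θ⟫))) • ahat)
      + (1 / (1 + Real.exp (-⟪Z, θ⟫))) • Z - Y • Z) :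
    ∀ θ, ⟪θ, Hi θ⟫ ≥ (1 / (4 * (n : ℝ))) * ‖θ‖ ^ 2 - (1 / (2 * (n : ℝ))) * ‖ahat‖ ^ 2
      - 2 * (n : ℝ) * ((‖Z‖ ^ 2 + Y ^ 2) + (‖Z‖ ^ 2 + Y ^ 2) ^ 2) := by
  intro θ
  have hn' : (1 : ℝ) ≤ n := by exact_mod_cast hn
  have he1 : 0 < Real.exp (2 * ⟪ahat, θ⟫) := Real.exp_pos _
  have he2 : 0 < Real.exp (-⟪Z, θ⟫) := Real.exp_pos _
  have hinner : ⟪θ, Hi θ⟫ =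
      (1 / (n : ℝ)) * (‖θ‖ ^ 2 - ⟪ahat, θ⟫
        + (2 / (1 + Real.exp (2 * ⟪ahat, θ⟫))) * ⟪ahat, θ⟫)
      + (1 / (1 + Real.exp (-⟪Z, θ⟫))) * ⟪Z, θ⟫ - Y * ⟪Z, θ⟫ := by
    rw [hHi θ]
    simp only [inner_add_right, inner_sub_right, inner_smul_right,
      real_inner_self_eq_norm_sq, real_inner_comm θ ahat, real_inner_comm θ Z]
  rw [hinner]
  have hu0 : 0 < 2 / (1 + Real.exp (2 * ⟪ahat, θ⟫)) := by positivity
  have hu2 : 2 / (1 + Real.exp (2 * ⟪ahat, θ⟫)) < 2 := by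
    rw [div_lt_iff₀ (by linarith)]; nlinarith
  have hσ0 : 0 < 1 / (1 + Real.exp (-⟪Z, θ⟫)) := by positivity
  have hσ1 : 1 / (1 + Real.exp (-⟪Z, θ⟫)) < 1 := by
    rw [div_lt_one (by linarith)]; linarith
  exact key_real n ‖θ‖ ‖ahat‖ ‖Z‖ ⟪ahat, θ⟫ ⟪Z, θ⟫
    (2 / (1 + Real.exp (2 * ⟪ahat, θ⟫))) (1 / (1 + Real.exp (-⟪Z, θ⟫))) Y
    hn' hu0 hu2 hσ0 hσ1 (norm_nonneg _) (norm_nonneg _) (norm_nonneg _)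
    (abs_real_inner_le_norm ahat θ) (abs_real_inner_le_norm Z θ)
end
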